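/- Let N ≥ 1, k ≥ 1, and let σ₁, …, σₖ be independent uniformly random permutations of Fin N (i.e., under the product of uniform measures on Equiv.Perm (Fin N)). For nonempty finite subsets A, B ⊆ Fin N, let Ĵ = (1/k)·|{i ∈ [k] : min σᵢ(A) = min σᵢ(B)}| be the fraction of matching MinHash coordinates. Then for every ε > 0, Pr[|Ĵ − J(A,B)| ≥ ε] ≤ 2·exp(−2kε²). In particular the k-MinHash signature estimates the Jaccard similarity with additive error O(1/√k) with high probability in k. -/

import Mathlib

open MeasureTheory
open scoped ENNReal

lemma nonneg_of_zero_of_deriv (f f' : ℝ → ℝ) (h0 : f 0 = 0)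
    (hd : ∀ t, HasDerivAt f (f' t) t) (hge : ∀ t, 0 ≤ t → 0 ≤ f' t) :
    ∀ t, 0 ≤ t → 0 ≤ f t := by
  have mono : MonotoneOn f (Set.Ici 0) := by
    apply monotoneOn_of_deriv_nonneg (convex_Ici 0)
    · exact fun x _ => (hd x).continuousAt.continuousWithinAt
    · intro x _; exact (hd x).differentiableAt.differentiableWithinAt
    · intro x hx
      rw [(hd x).deriv]
      exact hge x (le_of_lt (by simpa using hx))
  intro t ht
  calc (0:ℝ) = f 0 := h0.symm
  _ ≤ f t := mono (by simp) ht ht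

lemma hoeffding_core {q t : ℝ} (hq0 : 0 ≤ q) (hq1 : q ≤ 1) (ht : 0 ≤ t) :
    1 - q + q * Real.exp t ≤ Real.exp (t * q + t ^ 2 / 8) := by
  have den_pos : ∀ s : ℝ, 0 < 1 - q + q * Real.exp s := by
    intro s
    rcases lt_or_eq_of_le hq1 with h | h
    · have h1 : (0:ℝ) < 1 - q := by linarith
      have h2 : 0 ≤ q * Real.exp s := by positivity
      linarith
    · subst h; simpa using Real.exp_pos s
  set F : ℝ → ℝ := fun s => s * q + s ^ 2 / 8 - Real.log (1 - q + q * Real.exp s) with hF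
  set F' : ℝ → ℝ := fun s => q + s / 4 - q * Real.exp s / (1 - q + q * Real.exp s) with hF'
  set F'' : ℝ → ℝ := fun s =>
    1 / 4 - q * Real.exp s * (1 - q) / (1 - q + q * Real.exp s) ^ 2 with hF''
  have hden : ∀ s, HasDerivAt (fun x => 1 - q + q * Real.exp x) (q * Real.exp s) s := by
    intro s
    simpa using ((Real.hasDerivAt_exp s).const_mul q).const_add (1 - q)
  have hdF : ∀ s, HasDerivAt F (F' s) s := by
    intro s
    have h1 : HasDerivAt (fun x : ℝ => x * q + x ^ 2 / 8) (q + s / 4) s := by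
      have := ((hasDerivAt_id s).mul_const q).add
        (((hasDerivAt_pow 2 s).div_const 8))
      exact this.congr_deriv (by rw [show (2:ℕ) - 1 = 1 from rfl]; push_cast; ring)
    have h2 : HasDerivAt (fun x => Real.log (1 - q + q * Real.exp x))
        (q * Real.exp s / (1 - q + q * Real.exp s)) s :=
      (hden s).log (den_pos s).ne'
    exact h1.sub h2
  have hdF' : ∀ s, HasDerivAt F' (F'' s) s := by
    intro s
    have h1 : HasDerivAt (fun x : ℝ => q + x / 4) (1 / 4) s := by
      simpa using ((hasDerivAt_id s).div_const 4).const_add q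
    have h2 : HasDerivAt (fun x => q * Real.exp x / (1 - q + q * Real.exp x))
        ((q * Real.exp s * (1 - q + q * Real.exp s) - q * Real.exp s * (q * Real.exp s)) /
          (1 - q + q * Real.exp s) ^ 2) s :=
      ((Real.hasDerivAt_exp s).const_mul q).div (hden s) (den_pos s).ne'
    have hnum : q * Real.exp s * (1 - q + q * Real.exp s) - q * Real.exp s * (q * Real.exp s)
        = q * Real.exp s * (1 - q) := by ring
    rw [hnum] at h2
    exact h1.sub h2
  have hF''nonneg : ∀ s, 0 ≤ F'' s := by
    intro s
    have h := den_pos s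
    have he := Real.exp_pos s
    rw [hF'']
    rw [sub_nonneg, div_le_iff₀ (by positivity)]
    nlinarith [sq_nonneg (1 - q - q * Real.exp s)]
  have hF'nonneg : ∀ s, 0 ≤ s → 0 ≤ F' s := by
    apply nonneg_of_zero_of_deriv F' F''
    · simp [hF']
    · exact hdF'
    · exact fun s _ => hF''nonneg s
  have hFnonneg : 0 ≤ F t := by
    apply nonneg_of_zero_of_deriv F F' _ hdF hF'nonneg t ht
    simp [hF]
  rw [hF] at hFnonneg
  have hlog : Real.log (1 - q + q * Real.exp t) ≤ t * q + t ^ 2 / 8 := by linarith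
  calc 1 - q + q * Real.exp t = Real.exp (Real.log (1 - q + q * Real.exp t)) :=
        (Real.exp_log (den_pos t)).symm
  _ ≤ _ := Real.exp_le_exp.mpr hlog

lemma upper_tail (k : ℕ) (q ε : ℝ) (hq0 : 0 ≤ q) (hq1 : q ≤ 1) (hε : 0 < ε) :
    ∑ T ∈ (Finset.univ : Finset (Fin k)).powerset,
      (if ε ≤ (T.card : ℝ) / (k : ℝ) - q then q ^ T.card * (1 - q) ^ (k - T.card) else 0)
      ≤ Real.exp (-2 * (k : ℝ) * ε ^ 2) := by
  set t : ℝ := 4 * ε with hts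
  have ht : 0 ≤ t := by positivity
  have h1q : 0 ≤ 1 - q := by linarith
  have key : ∀ T ∈ (Finset.univ : Finset (Fin k)).powerset,
      (if ε ≤ (T.card : ℝ) / (k : ℝ) - q then q ^ T.card * (1 - q) ^ (k - T.card) else 0)
      ≤ Real.exp (-(t * k * (q + ε))) * ((q * Real.exp t) ^ T.card * (1 - q) ^ (k - T.card)) := by
    intro T hT
    by_cases hc : ε ≤ (T.card : ℝ) / (k : ℝ) - q
    · rw [if_pos hc]
      have hck : (T.card : ℝ) ≤ k := by
        exact_mod_cast Finset.card_le_card (by simpa using Finset.mem_powerset.mp hT) |>.trans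
          (le_of_eq (Finset.card_univ.trans (Fintype.card_fin k)))
      have hkpos : (0:ℝ) < k := by
        rcases Nat.eq_zero_or_pos k with h | h
        · subst h; simp at hc; nlinarith [T.card.cast_nonneg (α := ℝ)]
        · exact_mod_cast h
      have hexp : (1:ℝ) ≤ Real.exp (t * T.card - t * k * (q + ε)) := by
        rw [Real.one_le_exp_iff]
        have h' : ε * k ≤ ((T.card : ℝ) / k - q) * k := mul_le_mul_of_nonneg_right hc hkpos.le
        rw [sub_mul, div_mul_cancel₀ _ hkpos.ne'] at h'
        nlinarith [hε.le]
      calc q ^ T.card * (1 - q) ^ (k - T.card)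
          ≤ Real.exp (t * T.card - t * k * (q + ε)) * (q ^ T.card * (1 - q) ^ (k - T.card)) := by
            nth_rewrite 1 [← one_mul (q ^ T.card * (1 - q) ^ (k - T.card))]
            exact mul_le_mul_of_nonneg_right hexp (by positivity)
        _ = Real.exp (-(t * k * (q + ε))) * ((q * Real.exp t) ^ T.card * (1 - q) ^ (k - T.card)) := by
            rw [mul_pow, ← Real.exp_nat_mul]
            rw [show t * (T.card : ℝ) - t * k * (q + ε) = -(t * k * (q + ε)) + (T.card : ℝ) * t by ring]
            rw [Real.exp_add]
            ring
    · rw [if_neg hc]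
      positivity
  calc ∑ T ∈ (Finset.univ : Finset (Fin k)).powerset,
        (if ε ≤ (T.card : ℝ) / (k : ℝ) - q then q ^ T.card * (1 - q) ^ (k - T.card) else 0)
      ≤ ∑ T ∈ (Finset.univ : Finset (Fin k)).powerset,
        Real.exp (-(t * k * (q + ε))) * ((q * Real.exp t) ^ T.card * (1 - q) ^ (k - T.card)) :=
        Finset.sum_le_sum key
    _ = Real.exp (-(t * k * (q + ε))) * (q * Real.exp t + (1 - q)) ^ k := by
        rw [← Finset.mul_sum]
        congr 1
        have h := Finset.prod_add (fun _ : Fin k => q * Real.exp t) (fun _ => 1 - q) Finset.univ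
        simp only [Finset.prod_const, Finset.card_univ, Fintype.card_fin] at h
        rw [h]
        refine (Finset.sum_congr rfl fun T hT => ?_).symm
        rw [Finset.card_sdiff_of_subset (Finset.mem_powerset.mp hT)]
        simp
    _ ≤ Real.exp (-(t * k * (q + ε))) * Real.exp (t * q + t ^ 2 / 8) ^ k := by
        apply mul_le_mul_of_nonneg_left _ (Real.exp_pos _).le
        apply pow_le_pow_left₀ (by positivity)
        rw [show q * Real.exp t + (1 - q) = 1 - q + q * Real.exp t by ring]
        exact hoeffding_core hq0 hq1 ht
    _ ≤ Real.exp (-2 * (k : ℝ) * ε ^ 2) := by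
        rw [← Real.exp_nat_mul, ← Real.exp_add, Real.exp_le_exp]
        have hk0 : (0:ℝ) ≤ k := Nat.cast_nonneg k
        rw [hts]
        nlinarith [hk0]

lemma two_tail (k : ℕ) (hk : 1 ≤ k) (q ε : ℝ) (hq0 : 0 ≤ q) (hq1 : q ≤ 1) (hε : 0 < ε) :
    ∑ T ∈ (Finset.univ : Finset (Fin k)).powerset,
      (if ε ≤ |(T.card : ℝ) / (k : ℝ) - q| then q ^ T.card * (1 - q) ^ (k - T.card) else 0)
      ≤ 2 * Real.exp (-2 * (k : ℝ) * ε ^ 2) := by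
  have h1q : 0 ≤ 1 - q := by linarith
  have hkpos : (0:ℝ) < k := by exact_mod_cast hk
  have hsplit : ∀ T : Finset (Fin k),
      (if ε ≤ |(T.card : ℝ) / (k : ℝ) - q| then q ^ T.card * (1 - q) ^ (k - T.card) else 0)
      ≤ (if ε ≤ (T.card : ℝ) / (k : ℝ) - q then q ^ T.card * (1 - q) ^ (k - T.card) else 0)
        + (if ε ≤ q - (T.card : ℝ) / (k : ℝ) then q ^ T.card * (1 - q) ^ (k - T.card) else 0) := by
    intro T
    by_cases h : ε ≤ |(T.card : ℝ) / (k : ℝ) - q|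
    · rw [if_pos h]
      rcases le_abs.mp h with h' | h'
      · rw [if_pos h']
        have : (0:ℝ) ≤ if ε ≤ q - (T.card : ℝ) / (k : ℝ) then q ^ T.card * (1 - q) ^ (k - T.card) else 0 := by
          split <;> positivity
        linarith
      · rw [if_pos (by linarith : ε ≤ q - (T.card : ℝ) / (k : ℝ))]
        have : (0:ℝ) ≤ if ε ≤ (T.card : ℝ) / (k : ℝ) - q then q ^ T.card * (1 - q) ^ (k - T.card) else 0 := by
          split <;> positivity
        linarith
    · rw [if_neg h]
      have h1 : (0:ℝ) ≤ if ε ≤ (T.card : ℝ) / (k : ℝ) - q then q ^ T.card * (1 - q) ^ (k - T.card) else 0 := by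
        split <;> positivity
      have h2 : (0:ℝ) ≤ if ε ≤ q - (T.card : ℝ) / (k : ℝ) then q ^ T.card * (1 - q) ^ (k - T.card) else 0 := by
        split <;> positivity
      linarith
  have hlo : ∑ T ∈ (Finset.univ : Finset (Fin k)).powerset,
      (if ε ≤ q - (T.card : ℝ) / (k : ℝ) then q ^ T.card * (1 - q) ^ (k - T.card) else 0)
      = ∑ T ∈ (Finset.univ : Finset (Fin k)).powerset,
      (if ε ≤ (T.card : ℝ) / (k : ℝ) - (1 - q) then (1 - q) ^ T.card * (1 - (1 - q)) ^ (k - T.card) else 0) := by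
    rw [Finset.powerset_univ]
    refine Fintype.sum_bijective (fun T => Tᶜ)
      (Function.Involutive.bijective (fun T => compl_compl T)) _ _ (fun T => ?_)
    have hcle : T.card ≤ k := by simpa using Finset.card_le_univ T
    have hcompl : Tᶜ.card = k - T.card := by simp [Finset.card_compl]
    rw [hcompl]
    have hcast : ((k - T.card : ℕ) : ℝ) = (k : ℝ) - T.card := by
      rw [Nat.cast_sub hcle]
    have hcond : ((k - T.card : ℕ) : ℝ) / (k : ℝ) - (1 - q) = q - (T.card : ℝ) / (k : ℝ) := by
      rw [hcast]; field_simp; ring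
    rw [hcond, Nat.sub_sub_self hcle]
    congr 1
    rw [show 1 - (1 - q) = q by ring]
    ring
  calc ∑ T ∈ (Finset.univ : Finset (Fin k)).powerset,
        (if ε ≤ |(T.card : ℝ) / (k : ℝ) - q| then q ^ T.card * (1 - q) ^ (k - T.card) else 0)
      ≤ ∑ T ∈ (Finset.univ : Finset (Fin k)).powerset,
        ((if ε ≤ (T.card : ℝ) / (k : ℝ) - q then q ^ T.card * (1 - q) ^ (k - T.card) else 0)
          + (if ε ≤ q - (T.card : ℝ) / (k : ℝ) then q ^ T.card * (1 - q) ^ (k - T.card) else 0)) :=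
        Finset.sum_le_sum (fun T _ => hsplit T)
    _ = _ + _ := Finset.sum_add_distrib
    _ ≤ Real.exp (-2 * (k : ℝ) * ε ^ 2) + Real.exp (-2 * (k : ℝ) * ε ^ 2) := by
        apply add_le_add (upper_tail k q ε hq0 hq1 hε)
        rw [hlo]
        exact upper_tail k (1 - q) ε (by linarith) (by linarith) hε
    _ = 2 * Real.exp (-2 * (k : ℝ) * ε ^ 2) := by ring

lemma min'_congr' {α : Type*} [LinearOrder α] {s t : Finset α} (hs : s.Nonempty)
    (hst : s = t) : s.min' hs = t.min' (hst ▸ hs) := by subst hst; rfl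

lemma minhash_count (N : ℕ) (A B : Finset (Fin N)) (hA : A.Nonempty) (hB : B.Nonempty) :
    (Finset.univ.filter fun π : Equiv.Perm (Fin N) =>
        (A.image π).min' (hA.image π) = (B.image π).min' (hB.image π)).card * (A ∪ B).card
      = (A ∩ B).card * Fintype.card (Equiv.Perm (Fin N)) := by
  have hAB : (A ∪ B).Nonempty := hA.mono Finset.subset_union_left
  set f : Equiv.Perm (Fin N) → Fin N :=
    fun π => π⁻¹ (((A ∪ B).image π).min' (hAB.image π)) with hf
  -- f π is in A ∪ B
  have hmem : ∀ π : Equiv.Perm (Fin N), f π ∈ A ∪ B := by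
    intro π
    have h := Finset.min'_mem ((A ∪ B).image π) (hAB.image π)
    rcases Finset.mem_image.mp h with ⟨a, ha, hπa⟩
    have : f π = a := by rw [hf]; simp [← hπa]
    rwa [this]
  -- match iff f π ∈ A ∩ B
  have hiff : ∀ π : Equiv.Perm (Fin N),
      ((A.image π).min' (hA.image π) = (B.image π).min' (hB.image π)) ↔ f π ∈ A ∩ B := by
    intro π
    set u := ((A ∪ B).image π).min' (hAB.image π) with hu
    have humem : u ∈ (A ∪ B).image π := Finset.min'_mem _ _
    have himg : (A ∪ B).image π = A.image π ∪ B.image π := Finset.image_union _ _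
    constructor
    · intro hmatch
      set v := (A.image π).min' (hA.image π) with hv
      have hvA : v ∈ A.image π := Finset.min'_mem _ _
      have hvB : v ∈ B.image π := hmatch ▸ Finset.min'_mem _ _
      have huv : u ≤ v := Finset.min'_le _ _ (by rw [himg]; exact Finset.mem_union_left _ hvA)
      have hvu : v ≤ u := by
        rw [himg] at humem
        rcases Finset.mem_union.mp humem with h | h
        · exact Finset.min'_le _ _ h
        · rw [hmatch]; exact Finset.min'_le _ _ h
      have huveq : u = v := le_antisymm huv hvu
      rcases Finset.mem_image.mp hvA with ⟨a, ha, hπa⟩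
      rcases Finset.mem_image.mp hvB with ⟨b, hb, hπb⟩
      have hfa : f π = a := by rw [hf]; simp [← hu, huveq, ← hπa]
      have hfb : f π = b := by rw [hf]; simp [← hu, huveq, ← hπb]
      exact Finset.mem_inter.mpr ⟨hfa ▸ ha, hfb ▸ hb⟩
    · intro hfAB
      rcases Finset.mem_inter.mp hfAB with ⟨hfA, hfB⟩
      have hπf : π (f π) = u := by rw [hf]; simp; rfl
      have huA : u ∈ A.image π := by
        rw [← hπf]; exact Finset.mem_image_of_mem _ hfA
      have huB : u ∈ B.image π := by
        rw [← hπf]; exact Finset.mem_image_of_mem _ hfB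
      have h1 : (A.image π).min' (hA.image π) = u := by
        apply le_antisymm (Finset.min'_le _ _ huA)
        apply Finset.min'_le
        rw [himg]
        exact Finset.mem_union_left _ (Finset.min'_mem _ _)
      have h2 : (B.image π).min' (hB.image π) = u := by
        apply le_antisymm (Finset.min'_le _ _ huB)
        apply Finset.min'_le
        rw [himg]
        exact Finset.mem_union_right _ (Finset.min'_mem _ _)
      rw [h1, h2]
  -- fibers of f over A ∪ B are equicardinal
  have hfib : ∀ x ∈ A ∪ B, ∀ y ∈ A ∪ B,
      (Finset.univ.filter fun π => f π = x).card
        = (Finset.univ.filter fun π => f π = y).card := by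
    intro x hx y hy
    have key : ∀ (a b : Fin N), a ∈ A ∪ B → b ∈ A ∪ B → ∀ π : Equiv.Perm (Fin N),
        f π = a → f (π * Equiv.swap a b) = b := by
      intro a b ha hb π hπ
      have himgswap : (A ∪ B).image ⇑(π * Equiv.swap a b) = (A ∪ B).image π := by
        rw [show ⇑(π * Equiv.swap a b) = ⇑π ∘ ⇑(Equiv.swap a b) from rfl,
          ← Finset.image_image]
        congr 1
        apply Finset.eq_of_subset_of_card_le
        · intro z hz
          rcases Finset.mem_image.mp hz with ⟨w, hw, hww⟩
          rcases eq_or_ne w a with rfl | hwa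
          · rwa [← hww, Equiv.swap_apply_left]
          rcases eq_or_ne w b with rfl | hwb
          · rwa [← hww, Equiv.swap_apply_right]
          · rwa [← hww, Equiv.swap_apply_of_ne_of_ne hwa hwb]
        · rw [Finset.card_image_of_injective _ (Equiv.injective _)]
      rw [hf]
      simp only
      rw [min'_congr' _ himgswap]
      have : (π * Equiv.swap a b)⁻¹ = (Equiv.swap a b)⁻¹ * π⁻¹ := mul_inv_rev _ _
      rw [this]
      rw [Equiv.Perm.mul_apply]
      rw [hf] at hπ
      simp only at hπ
      rw [hπ]
      simp [Equiv.swap_apply_left]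
    apply Finset.card_bij' (fun π _ => π * Equiv.swap x y) (fun π _ => π * Equiv.swap x y)
    · intro π hπ
      simp only [Finset.mem_filter, Finset.mem_univ, true_and] at hπ ⊢
      exact key x y hx hy π hπ
    · intro π hπ
      simp only [Finset.mem_filter, Finset.mem_univ, true_and] at hπ ⊢
      have := key y x hy hx π hπ
      rwa [Equiv.swap_comm] at this
    · intro π _
      rw [mul_assoc]
      simp
    · intro π _
      rw [mul_assoc]
      simp
  -- sum over fibers
  obtain ⟨x₀, hx₀⟩ := hAB
  set c := (Finset.univ.filter fun π => f π = x₀).card with hc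
  have htot : Fintype.card (Equiv.Perm (Fin N)) = (A ∪ B).card * c := by
    rw [← Finset.card_univ]
    rw [Finset.card_eq_sum_card_fiberwise (fun π _ => hmem π)]
    rw [Finset.sum_congr rfl (fun x hx => hfib x hx x₀ hx₀)]
    rw [Finset.sum_const, smul_eq_mul]
  have hM : (Finset.univ.filter fun π : Equiv.Perm (Fin N) =>
      (A.image π).min' (hA.image π) = (B.image π).min' (hB.image π)).card
      = (A ∩ B).card * c := by
    have hMeq : (Finset.univ.filter fun π : Equiv.Perm (Fin N) =>
        (A.image π).min' (hA.image π) = (B.image π).min' (hB.image π))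
        = Finset.univ.filter (fun π => f π ∈ A ∩ B) := by
      apply Finset.filter_congr
      intro π _
      simp [hiff π]
    rw [hMeq]
    rw [Finset.card_eq_sum_card_fiberwise
      (f := f) (s := Finset.univ.filter (fun π => f π ∈ A ∩ B)) (t := A ∩ B) (fun π hπ => (Finset.mem_filter.mp hπ).2)]
    have hstep : ∀ x ∈ A ∩ B,
        ((Finset.univ.filter (fun π => f π ∈ A ∩ B)).filter (fun π => f π = x)).card
          = c := by
      intro x hx
      have : (Finset.univ.filter (fun π => f π ∈ A ∩ B)).filter (fun π => f π = x)
          = Finset.univ.filter (fun π => f π = x) := by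
        ext π
        simp only [Finset.mem_filter, Finset.mem_univ, true_and]
        constructor
        · rintro ⟨_, h⟩; exact h
        · intro h; exact ⟨h ▸ hx, h⟩
      rw [this]
      exact hfib x (Finset.mem_union_left _ (Finset.mem_inter.mp hx).1) x₀ hx₀
    rw [Finset.sum_congr rfl hstep, Finset.sum_const, smul_eq_mul]
  rw [hM, htot]
  ring

/-- **Concentration of the `k`-MinHash estimator.**  Let `σ₁, …, σₖ` be independent
uniformly random permutations of `Fin N` (product of uniform measures on
`Equiv.Perm (Fin N)`).  For nonempty finite sets `A, B ⊆ Fin N`, the fraction `Ĵ`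
of indices `i` with `min σᵢ(A) = min σᵢ(B)` satisfies
`Pr[|Ĵ − J(A,B)| ≥ ε] ≤ 2 exp(−2 k ε²)` for every `ε > 0`. -/
theorem kminhash_concentration (N k : ℕ) (hN : 1 ≤ N) (hk : 1 ≤ k)
    (A B : Finset (Fin N)) (hA : A.Nonempty) (hB : B.Nonempty)
    (ε : ℝ) (hε : 0 < ε) :
    letI : MeasurableSpace (Equiv.Perm (Fin N)) := ⊤
    (Measure.pi fun _ : Fin k =>
        (PMF.uniformOfFintype (Equiv.Perm (Fin N))).toMeasure)
      {σ : Fin k → Equiv.Perm (Fin N) |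
        ε ≤ |((Finset.univ.filter fun i : Fin k =>
                  (A.image (σ i)).min' (hA.image (σ i)) =
                    (B.image (σ i)).min' (hB.image (σ i))).card : ℝ) / (k : ℝ)
              - ((A ∩ B).card : ℝ) / ((A ∪ B).card : ℝ)|}
      ≤ ENNReal.ofReal (2 * Real.exp (-2 * (k : ℝ) * ε ^ 2)) := by
  classical
  letI : MeasurableSpace (Equiv.Perm (Fin N)) := ⊤
  haveI : MeasurableSingletonClass (Equiv.Perm (Fin N)) := ⟨fun _ => trivial⟩
  set μ := Measure.pi fun _ : Fin k =>
    (PMF.uniformOfFintype (Equiv.Perm (Fin N))).toMeasure with hμ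
  -- abbreviations
  set M : ℕ := Fintype.card (Equiv.Perm (Fin N)) with hM
  set Mset : Finset (Equiv.Perm (Fin N)) := Finset.univ.filter fun π =>
    (A.image π).min' (hA.image π) = (B.image π).min' (hB.image π) with hMset
  set m : ℕ := Mset.card with hm
  set q : ℝ := ((A ∩ B).card : ℝ) / ((A ∪ B).card : ℝ) with hq
  have hABne : (A ∪ B).Nonempty := hA.mono Finset.subset_union_left
  have hABpos : (0:ℝ) < (A ∪ B).card := by exact_mod_cast Finset.card_pos.mpr hABne
  have hMpos : 0 < M := Fintype.card_pos
  have hq0 : 0 ≤ q := by positivity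
  have hq1 : q ≤ 1 := by
    rw [hq, div_le_one hABpos]
    exact_mod_cast Finset.card_le_card (Finset.inter_subset_union)
  have hmM : m ≤ M := by
    rw [hm, hM, ← Finset.card_univ]
    exact Finset.card_le_card (Finset.subset_univ _)
  have hmq : (m : ℝ) = q * M := by
    have := minhash_count N A B hA hB
    rw [← hMset, ← hm, ← hM] at this
    have h2 : (m : ℝ) * (A ∪ B).card = (A ∩ B).card * M := by exact_mod_cast this
    rw [hq]
    field_simp
    linarith [h2]
  have hMm : ((M - m : ℕ) : ℝ) = (1 - q) * M := by
    rw [Nat.cast_sub hmM, hmq]; ring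
  -- the pattern map
  set pat : (Fin k → Equiv.Perm (Fin N)) → Finset (Fin k) := fun σ =>
    Finset.univ.filter fun i =>
      (A.image (σ i)).min' (hA.image (σ i)) = (B.image (σ i)).min' (hB.image (σ i)) with hpat
  set Sfin : Finset (Fin k → Equiv.Perm (Fin N)) :=
    Finset.univ.filter (fun σ => ε ≤ |((pat σ).card : ℝ) / (k : ℝ) - q|) with hSfin
  have hSset : {σ : Fin k → Equiv.Perm (Fin N) |
        ε ≤ |((Finset.univ.filter fun i : Fin k =>
                  (A.image (σ i)).min' (hA.image (σ i)) =
                    (B.image (σ i)).min' (hB.image (σ i))).card : ℝ) / (k : ℝ)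
              - ((A ∩ B).card : ℝ) / ((A ∪ B).card : ℝ)|} = ↑Sfin := by
    ext σ
    simp only [Set.mem_setOf_eq, hSfin, Finset.coe_filter, Finset.mem_univ, true_and,
      Set.mem_setOf_eq, hpat, hq]
  -- measure of the set = card * (1/M)^k
  have hsingle : ∀ σ : Fin k → Equiv.Perm (Fin N), μ {σ} = ((M : ℝ≥0∞)⁻¹) ^ k := by
    intro σ
    rw [← Set.univ_pi_singleton, hμ, Measure.pi_pi]
    have hone : ∀ i : Fin k,
        (PMF.uniformOfFintype (Equiv.Perm (Fin N))).toMeasure {σ i} = (M : ℝ≥0∞)⁻¹ := by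
      intro i
      rw [PMF.toMeasure_apply_singleton _ _ (MeasurableSet.of_discrete),
        PMF.uniformOfFintype_apply, hM]
    rw [Finset.prod_congr rfl (fun i _ => hone i), Finset.prod_const, Finset.card_univ,
      Fintype.card_fin]
  have hmeas : μ ↑Sfin = (Sfin.card : ℝ≥0∞) * ((M : ℝ≥0∞)⁻¹) ^ k := by
    have h := MeasureTheory.sum_measure_preimage_singleton (μ := μ)
      (f := fun σ : Fin k → Equiv.Perm (Fin N) => σ) Sfin
      (fun b _ => MeasurableSet.of_discrete)
    simp only [Set.preimage_id'] at h
    rw [← h, Finset.sum_congr rfl (fun σ _ => hsingle σ), Finset.sum_const, nsmul_eq_mul]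
  -- counting Sfin by pattern
  have hcount : (Sfin.card : ℝ) = ∑ T ∈ (Finset.univ : Finset (Fin k)).powerset,
      (if ε ≤ |(T.card : ℝ) / (k : ℝ) - q|
        then (m : ℝ) ^ T.card * ((M - m : ℕ) : ℝ) ^ (k - T.card) else 0) := by
    have hfib : Sfin.card = ∑ T ∈ (Finset.univ : Finset (Fin k)).powerset,
        (Sfin.filter (fun σ => pat σ = T)).card :=
      Finset.card_eq_sum_card_fiberwise (fun σ _ => Finset.mem_powerset.mpr (Finset.subset_univ _))
    rw [hfib]
    push_cast
    apply Finset.sum_congr rfl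
    intro T _
    by_cases hbad : ε ≤ |(T.card : ℝ) / (k : ℝ) - q|
    · rw [if_pos hbad]
      have hfil : Sfin.filter (fun σ => pat σ = T)
          = Fintype.piFinset (fun i => if i ∈ T then Mset else Msetᶜ) := by
        ext σ
        simp only [Finset.mem_filter, hSfin, Finset.mem_univ, true_and,
          Fintype.mem_piFinset]
        constructor
        · rintro ⟨_, hpT⟩
          intro i
          by_cases hi : i ∈ T
          · rw [if_pos hi]
            have : i ∈ pat σ := hpT ▸ hi
            simp only [hpat, Finset.mem_filter, Finset.mem_univ, true_and] at this
            simp only [hMset, Finset.mem_filter, Finset.mem_univ, true_and]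
            exact this
          · rw [if_neg hi]
            have : i ∉ pat σ := fun h => hi (hpT ▸ h)
            simp only [hpat, Finset.mem_filter, Finset.mem_univ, true_and] at this
            simp only [Finset.mem_compl, hMset, Finset.mem_filter, Finset.mem_univ, true_and]
            exact this
        · intro hall
          have hpT : pat σ = T := by
            ext i
            simp only [hpat, Finset.mem_filter, Finset.mem_univ, true_and]
            have := hall i
            by_cases hi : i ∈ T
            · rw [if_pos hi] at this
              simp only [hMset, Finset.mem_filter, Finset.mem_univ, true_and] at this
              exact ⟨fun _ => hi, fun _ => this⟩
            · rw [if_neg hi] at this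
              simp only [Finset.mem_compl, hMset, Finset.mem_filter, Finset.mem_univ,
                true_and] at this
              exact ⟨fun h => absurd h this, fun h => absurd h hi⟩
          exact ⟨hpT ▸ hbad, hpT⟩
      rw [hfil, Fintype.card_piFinset]
      have : ∀ i : Fin k, (if i ∈ T then Mset else Msetᶜ).card
          = if i ∈ T then m else M - m := by
        intro i
        by_cases hi : i ∈ T
        · rw [if_pos hi, if_pos hi, hm]
        · rw [if_neg hi, if_neg hi, Finset.card_compl, hm, hM]
      rw [Finset.prod_congr rfl (fun i _ => this i)]
      rw [Finset.prod_ite]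
      rw [Finset.prod_const, Finset.prod_const]
      have h1 : (Finset.univ.filter (fun i => i ∈ T)).card = T.card := by
        simp [Finset.filter_mem_eq_inter]
      have h2 : (Finset.univ.filter (fun i => ¬ i ∈ T)).card = k - T.card := by
        rw [Finset.filter_not, Finset.filter_mem_eq_inter, Finset.univ_inter,
          Finset.card_sdiff_of_subset (Finset.subset_univ _)]
        simp
      rw [h1, h2]
      push_cast
      ring
    · rw [if_neg hbad]
      have : Sfin.filter (fun σ => pat σ = T) = ∅ := by
        rw [Finset.filter_eq_empty_iff]
        intro σ hσ
        simp only [hSfin, Finset.mem_filter, Finset.mem_univ, true_and] at hσ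
        intro hpT
        exact hbad (hpT ▸ hσ)
      rw [this]
      simp
  -- put everything together
  have hreal : (Sfin.card : ℝ) * (((M : ℝ))⁻¹) ^ k ≤ 2 * Real.exp (-2 * (k : ℝ) * ε ^ 2) := by
    rw [hcount, Finset.sum_mul]
    refine le_trans (le_of_eq (Finset.sum_congr rfl ?_)) (two_tail k hk q ε hq0 hq1 hε)
    intro T hT
    have hTk : T.card ≤ k := by
      have := Finset.card_le_card (Finset.mem_powerset.mp hT)
      simpa using this
    by_cases hbad : ε ≤ |(T.card : ℝ) / (k : ℝ) - q|
    · rw [if_pos hbad, if_pos hbad, hmq, hMm]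
      have hMne : (M : ℝ) ≠ 0 := by positivity
      have hpowsplit : (M : ℝ) ^ T.card * (M : ℝ) ^ (k - T.card) = (M : ℝ) ^ k := by
        rw [← pow_add]; congr 1; omega
      rw [mul_pow, mul_pow, inv_pow, ← hpowsplit]
      field_simp
    · rw [if_neg hbad, if_neg hbad, zero_mul]
  -- transfer to ENNReal
  rw [hSset, hmeas]
  have hcast : (Sfin.card : ℝ≥0∞) * ((M : ℝ≥0∞)⁻¹) ^ k
      = ENNReal.ofReal ((Sfin.card : ℝ) * (((M : ℝ))⁻¹) ^ k) := by
    rw [ENNReal.ofReal_mul (by positivity), ENNReal.ofReal_pow (by positivity),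
      ENNReal.ofReal_inv_of_pos (by exact_mod_cast hMpos), ENNReal.ofReal_natCast,
      ENNReal.ofReal_natCast]
  rw [hcast]
  exact ENNReal.ofReal_le_ofReal hreal
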